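/- (de la Vallée Poussin) Let ℓ > 0 and let a_1,…,a_n : [0,ℓ] → ℝ be continuous functions with |a_k(t)| ≤ A_k for all t ∈ [0,ℓ], k = 1,…,n, where the constants A_k satisfy Σ_{k=1}^n A_k · ℓ^k / k! < 1. Let f : [0,ℓ] → ℝ be n times continuously differentiable and satisfy the linear ordinary differential equation f^{(n)}(t) + a_1(t) f^{(n−1)}(t) + ⋯ + a_{n−1}(t) f'(t) + a_n(t) f(t) = 0 for all t ∈ [0,ℓ]. If f has at least n distinct zeros in [0,ℓ], then f is identically zero on [0,ℓ]. Equivalently, every nontrivial solution has at most n − 1 distinct zeros on [0,ℓ]. -/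

import Mathlib

open Set Polynomial


-- iterated deriv of polynomial eval
lemma dvp_polyIter (P : ℝ[X]) (k : ℕ) :
    iteratedDeriv k (fun x => P.eval x) = fun x => (Polynomial.derivative^[k] P).eval x := by
  induction k with
  | zero => simp
  | succ k IH =>
    rw [iteratedDeriv_succ, IH, Function.iterate_succ_apply']
    funext x
    exact Polynomial.deriv _

-- within = global for polynomial eval
lemma dvp_polyWithin {s : Set ℝ} (hs : UniqueDiffOn ℝ s) (P : ℝ[X]) (k : ℕ) :
    ∀ x ∈ s, iteratedDerivWithin k (fun x => P.eval x) s x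
      = (Polynomial.derivative^[k] P).eval x := by
  induction k with
  | zero => intro x _; simp
  | succ k IH =>
    intro x hx
    rw [iteratedDerivWithin_succ,
      derivWithin_congr (fun y hy => IH y hy) (IH x hx),
      Function.iterate_succ_apply']
    exact Polynomial.derivWithin _ (hs x hx)

-- iterated of iterated
lemma dvp_iter_iter {s : Set ℝ} (hs : UniqueDiffOn ℝ s) (f : ℝ → ℝ) (m : ℕ) :
    ∀ (k : ℕ), ∀ x ∈ s,
      iteratedDerivWithin k (iteratedDerivWithin m f s) s x
        = iteratedDerivWithin (m + k) f s x := by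
  intro k
  induction k with
  | zero => intro x _; simp
  | succ k IH =>
    intro x hx
    rw [iteratedDerivWithin_succ,
      derivWithin_congr (fun y hy => IH y hy) (IH x hx),
      ← iteratedDerivWithin_succ]
    ring_nf

-- smoothness of iterated derivatives
lemma dvp_contDiffOn_iter {s : Set ℝ} (hs : UniqueDiffOn ℝ s) :
    ∀ (m : ℕ) (f : ℝ → ℝ) (n k : ℕ), ContDiffOn ℝ n f s → m + k ≤ n →
      ContDiffOn ℝ k (iteratedDerivWithin m f s) s := by
  intro m
  induction m with
  | zero =>
    intro f n k hf h
    rw [iteratedDerivWithin_zero]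
    exact hf.of_le (by exact_mod_cast (by omega : k ≤ n))
  | succ m IH =>
    intro f n k hf h
    have hn1 : 1 ≤ n := by omega
    have hd : ContDiffOn ℝ (n - 1 : ℕ) (derivWithin f s) s := by
      apply hf.derivWithin hs
      exact_mod_cast (by omega : (n - 1) + 1 ≤ n)
    have := IH (derivWithin f s) (n - 1) k hd (by omega)
    exact this.congr (fun x hx => congrFun iteratedDerivWithin_succ' x)

-- one-step Rolle on a finset of zeros
lemma dvp_rolle_step {ℓ : ℝ} (hℓ : 0 < ℓ) {h : ℝ → ℝ}
    (hc : ContinuousOn h (Icc 0 ℓ)) (S : Finset ℝ)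
    (hS : ∀ t ∈ S, t ∈ Icc (0:ℝ) ℓ ∧ h t = 0) :
    ∃ T : Finset ℝ, T.card = S.card - 1 ∧
      ∀ t ∈ T, t ∈ Icc (0:ℝ) ℓ ∧ derivWithin h (Icc 0 ℓ) t = 0 := by
  set z : Fin S.card → ℝ := fun i => ((S.orderIsoOfFin rfl i : ℝ)) with hz
  have hzmem : ∀ i, z i ∈ S := fun i => (S.orderIsoOfFin rfl i).2
  have hzmono : ∀ i j : Fin S.card, i < j → z i < z j := by
    intro i j hij
    exact_mod_cast (S.orderIsoOfFin rfl).lt_iff_lt.mpr hij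
  have key : ∀ i : Fin (S.card - 1), ∃ c : ℝ,
      z ⟨i.1, by omega⟩ < c ∧ c < z ⟨i.1 + 1, by omega⟩ ∧
      c ∈ Icc (0:ℝ) ℓ ∧ derivWithin h (Icc 0 ℓ) c = 0 := by
    intro i
    have hi1 : (i.1 : ℕ) < S.card := by omega
    have hi2 : (i.1 + 1 : ℕ) < S.card := by omega
    set p := z ⟨i.1, hi1⟩
    set q := z ⟨i.1 + 1, hi2⟩
    have hpq : p < q := hzmono _ _ (by simp [Fin.lt_def])
    have hp := hS p (hzmem _)
    have hq := hS q (hzmem _)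
    obtain ⟨c, hc1, hc2⟩ := exists_deriv_eq_zero hpq
      (hc.mono (Icc_subset_Icc hp.1.1 hq.1.2)) (hp.2.trans hq.2.symm)
    have hcIoo : c ∈ Ioo (0:ℝ) ℓ :=
      ⟨lt_of_le_of_lt hp.1.1 hc1.1, lt_of_lt_of_le hc1.2 hq.1.2⟩
    refine ⟨c, hc1.1, hc1.2, Ioo_subset_Icc_self hcIoo, ?_⟩
    rw [derivWithin_of_mem_nhds (Filter.mem_of_superset
      (isOpen_Ioo.mem_nhds hcIoo) Ioo_subset_Icc_self)]
    exact hc2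
  choose c hc1 hc2 hc3 hc4 using key
  have hcinj : Function.Injective c := by
    intro i j hij
    by_contra hne
    rcases Ne.lt_or_gt hne with hlt | hlt
    · have : c i < c j := by
        calc c i < z ⟨i.1 + 1, by omega⟩ := hc2 i
        _ ≤ z ⟨j.1, by omega⟩ := by
            rcases eq_or_lt_of_le (by omega : (i.1 + 1 : ℕ) ≤ j.1) with he | hlt'
            · exact le_of_eq (by congr 1; exact Fin.ext he)
            · exact le_of_lt (hzmono _ _ (by simp [Fin.lt_def]; omega))
        _ < c j := hc1 j
      exact absurd hij (ne_of_lt this)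
    · have : c j < c i := by
        calc c j < z ⟨j.1 + 1, by omega⟩ := hc2 j
        _ ≤ z ⟨i.1, by omega⟩ := by
            rcases eq_or_lt_of_le (by omega : (j.1 + 1 : ℕ) ≤ i.1) with he | hlt'
            · exact le_of_eq (by congr 1; exact Fin.ext he)
            · exact le_of_lt (hzmono _ _ (by simp [Fin.lt_def]; omega))
        _ < c i := hc1 i
      exact absurd hij.symm (ne_of_lt this)
  refine ⟨Finset.image c Finset.univ, ?_, ?_⟩
  · rw [Finset.card_image_of_injective _ hcinj, Finset.card_univ, Fintype.card_fin]
  · intro t ht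
    obtain ⟨i, _, rfl⟩ := Finset.mem_image.mp ht
    exact ⟨hc3 i, hc4 i⟩

-- iterated Rolle
lemma dvp_rolle_iter {ℓ : ℝ} (hℓ : 0 < ℓ) :
    ∀ (k : ℕ) (h : ℝ → ℝ), ContDiffOn ℝ k h (Icc 0 ℓ) →
      ∀ (S : Finset ℝ), (∀ t ∈ S, t ∈ Icc (0:ℝ) ℓ ∧ h t = 0) →
      ∃ T : Finset ℝ, S.card - k ≤ T.card ∧
        ∀ t ∈ T, t ∈ Icc (0:ℝ) ℓ ∧ iteratedDerivWithin k h (Icc 0 ℓ) t = 0 := by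
  intro k
  induction k with
  | zero =>
    intro h _ S hS
    exact ⟨S, by omega, fun t ht => ⟨(hS t ht).1, by simpa using (hS t ht).2⟩⟩
  | succ k IH =>
    intro h hc S hS
    have hs : UniqueDiffOn ℝ (Icc (0:ℝ) ℓ) := uniqueDiffOn_Icc hℓ
    obtain ⟨T₁, hT₁card, hT₁⟩ := dvp_rolle_step hℓ hc.continuousOn S hS
    have hd : ContDiffOn ℝ k (derivWithin h (Icc 0 ℓ)) (Icc 0 ℓ) :=
      hc.derivWithin hs (by exact_mod_cast le_refl (k+1))
    obtain ⟨T, hTcard, hT⟩ := IH (derivWithin h (Icc 0 ℓ)) hd T₁ hT₁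
    refine ⟨T, by omega, fun t ht => ⟨(hT t ht).1, ?_⟩⟩
    rw [iteratedDerivWithin_succ']
    exact (hT t ht).2

-- interpolation bound
lemma dvp_interp {ℓ : ℝ} (hℓ : 0 < ℓ) {g : ℝ → ℝ} {k : ℕ} (hk : 1 ≤ k)
    (hg : ContDiffOn ℝ k g (Icc 0 ℓ)) {M : ℝ} (hM0 : 0 ≤ M)
    (hMg : ∀ x ∈ Icc (0:ℝ) ℓ, |iteratedDerivWithin k g (Icc 0 ℓ) x| ≤ M)
    (T : Finset ℝ) (hTz : ∀ t ∈ T, t ∈ Icc (0:ℝ) ℓ ∧ g t = 0) (hTcard : k ≤ T.card) :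
    ∀ t ∈ Icc (0:ℝ) ℓ, |g t| ≤ M * ℓ ^ k / k.factorial := by
  intro t ht
  have hs : UniqueDiffOn ℝ (Icc (0:ℝ) ℓ) := uniqueDiffOn_Icc hℓ
  have hbound0 : (0:ℝ) ≤ M * ℓ ^ k / k.factorial := by positivity
  obtain ⟨T', hT'sub, hT'card⟩ := Finset.exists_subset_card_eq hTcard
  by_cases htT' : t ∈ T'
  · rw [(hTz t (hT'sub htT')).2, abs_zero]; exact hbound0
  set z : Fin k → ℝ := fun i => ((T'.orderIsoOfFin hT'card i : ℝ)) with hzdef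
  have hzmem : ∀ i, z i ∈ T' := fun i => (T'.orderIsoOfFin hT'card i).2
  have hzs : ∀ i, z i ∈ Icc (0:ℝ) ℓ ∧ g (z i) = 0 := fun i => hTz _ (hT'sub (hzmem i))
  set ω : ℝ → ℝ := fun x => ∏ i : Fin k, (x - z i) with hωdef
  set P : ℝ[X] := ∏ i : Fin k, (X - Polynomial.C (z i)) with hPdef
  have hωP : ω = fun x => P.eval x := by
    funext x; simp [hωdef, hPdef, Polynomial.eval_prod]
  have hωt : ω t ≠ 0 := by
    apply Finset.prod_ne_zero_iff.mpr
    intro i _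
    exact sub_ne_zero.mpr (fun he => htT' (he ▸ hzmem i))
  have hωcd : ContDiff ℝ k ω :=
    contDiff_prod fun i _ => contDiff_id.sub contDiff_const
  set c : ℝ := g t / ω t with hcdef
  set h : ℝ → ℝ := g - fun x => c * ω x with hhdef
  have hch : ContDiffOn ℝ k h (Icc 0 ℓ) :=
    hg.sub ((contDiff_const.mul hωcd).contDiffOn)
  set F : Finset ℝ := insert t T' with hFdef
  have hFcard : F.card = k + 1 := by
    rw [hFdef, Finset.card_insert_of_notMem htT', hT'card]
  have hFz : ∀ x ∈ F, x ∈ Icc (0:ℝ) ℓ ∧ h x = 0 := by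
    intro x hx
    rcases Finset.mem_insert.mp hx with rfl | hx
    · refine ⟨ht, ?_⟩
      show g x - c * ω x = 0
      rw [hcdef, div_mul_cancel₀ _ hωt, sub_self]
    · refine ⟨(hTz x (hT'sub hx)).1, ?_⟩
      have hωx : ω x = 0 := by
        obtain ⟨i, hi⟩ : ∃ i, z i = x := by
          refine ⟨(T'.orderIsoOfFin hT'card).symm ⟨x, hx⟩, ?_⟩
          exact congrArg Subtype.val ((T'.orderIsoOfFin hT'card).apply_symm_apply ⟨x, hx⟩)
        exact Finset.prod_eq_zero (Finset.mem_univ i) (by rw [hi, sub_self])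
      show g x - c * ω x = 0
      rw [(hTz x (hT'sub hx)).2, hωx, mul_zero, sub_zero]
  obtain ⟨T₂, hT₂card, hT₂⟩ := dvp_rolle_iter hℓ k h hch F hFz
  have hT₂pos : 0 < T₂.card := by omega
  obtain ⟨ξ, hξT⟩ := Finset.card_pos.mp hT₂pos
  have hξs : ξ ∈ Icc (0:ℝ) ℓ := (hT₂ ξ hξT).1
  have hξ0 : iteratedDerivWithin k h (Icc 0 ℓ) ξ = 0 := (hT₂ ξ hξT).2
  -- compute the iterated derivative of h
  have hsplit : iteratedDerivWithin k h (Icc 0 ℓ) ξ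
      = iteratedDerivWithin k g (Icc 0 ℓ) ξ - c * (k.factorial : ℝ) := by
    rw [hhdef, iteratedDerivWithin_sub hξs hs (hg ξ hξs) ((contDiff_const.mul hωcd).contDiffOn ξ hξs),
      iteratedDerivWithin_const_mul hξs hs c (hωcd.contDiffOn ξ hξs)]
    congr 1
    rw [hωP, dvp_polyWithin hs P k ξ hξs]
    -- value of k-th derivative of monic degree k polynomial
    have hPmonic : P.Monic := Polynomial.monic_prod_of_monic _ _ fun i _ =>
      Polynomial.monic_X_sub_C _
    have hPdeg : P.natDegree = k := by
      rw [hPdef, Polynomial.natDegree_prod_of_monic _ _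
        (fun i _ => Polynomial.monic_X_sub_C _)]
      simp [Polynomial.natDegree_X_sub_C]
    have hQdeg : (Polynomial.derivative^[k] P).natDegree ≤ 0 := by
      have := Polynomial.natDegree_iterate_derivative P k
      omega
    rw [Polynomial.eq_C_of_natDegree_le_zero hQdeg]
    rw [Polynomial.coeff_iterate_derivative]
    have hcoeff : P.coeff (0 + k) = 1 := by
      rw [zero_add, ← hPdeg]; exact hPmonic.coeff_natDegree
    rw [hcoeff, Polynomial.eval_C, zero_add, Nat.descFactorial_self]
    simp
  have hC : |c| * (k.factorial : ℝ) ≤ M := by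
    have : c * (k.factorial : ℝ) = iteratedDerivWithin k g (Icc 0 ℓ) ξ := by
      rw [← sub_eq_zero]; rw [hsplit] at hξ0; linarith
    calc |c| * (k.factorial : ℝ) = |c * (k.factorial : ℝ)| := by
          rw [abs_mul, abs_of_nonneg (by positivity : (0:ℝ) ≤ (k.factorial : ℝ))]
    _ = |iteratedDerivWithin k g (Icc 0 ℓ) ξ| := by rw [this]
    _ ≤ M := hMg ξ hξs
  have hωtb : |ω t| ≤ ℓ ^ k := by
    rw [hωdef, Finset.abs_prod]
    calc ∏ i : Fin k, |t - z i| ≤ ∏ i : Fin k, ℓ := by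
          apply Finset.prod_le_prod (fun i _ => abs_nonneg _)
          intro i _
          have h1 := ht.1; have h2 := ht.2
          have h3 := (hzs i).1.1; have h4 := (hzs i).1.2
          rw [abs_sub_le_iff]; constructor <;> linarith
    _ = ℓ ^ k := by simp
  have hgt : g t = c * ω t := by rw [hcdef, div_mul_cancel₀ _ hωt]
  have hfactpos : (0:ℝ) < (k.factorial : ℝ) := by positivity
  calc |g t| = |c| * |ω t| := by rw [hgt, abs_mul]
  _ ≤ (M / (k.factorial : ℝ)) * ℓ ^ k := by
      apply mul_le_mul _ hωtb (abs_nonneg _) (by positivity)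
      rw [le_div_iff₀ hfactpos]; exact hC
  _ = M * ℓ ^ k / k.factorial := by ring


/-- **de la Vallée Poussin theorem.** If the coefficients of the linear ODE
`y^{(n)} + a₁ y^{(n-1)} + ⋯ + aₙ y = 0` on `[0,ℓ]` satisfy `|a_k| ≤ A_k` with
`Σ A_k ℓ^k / k! < 1`, then any solution with at least `n` distinct zeros on
`[0,ℓ]` vanishes identically on `[0,ℓ]`. -/
theorem stmt5 (ℓ : ℝ) (hℓ : 0 < ℓ) (n : ℕ) (a : ℕ → ℝ → ℝ) (A : ℕ → ℝ)
    (hacont : ∀ k ∈ Finset.Icc 1 n, ContinuousOn (a k) (Set.Icc 0 ℓ))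
    (hbd : ∀ k ∈ Finset.Icc 1 n, ∀ t ∈ Set.Icc 0 ℓ, |a k t| ≤ A k)
    (hsmall : ∑ k ∈ Finset.Icc 1 n, A k * ℓ ^ k / (k.factorial : ℝ) < 1)
    (f : ℝ → ℝ) (hf : ContDiffOn ℝ n f (Set.Icc 0 ℓ))
    (hode : ∀ t ∈ Set.Icc 0 ℓ,
      iteratedDerivWithin n f (Set.Icc 0 ℓ) t
        + ∑ k ∈ Finset.Icc 1 n, a k t * iteratedDerivWithin (n - k) f (Set.Icc 0 ℓ) t = 0)
    (Z : Finset ℝ) (hZ : ∀ t ∈ Z, t ∈ Set.Icc 0 ℓ ∧ f t = 0)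
    (hcard : n ≤ Z.card) :
    ∀ t ∈ Set.Icc 0 ℓ, f t = 0 := by
  intro t ht
  rcases Nat.eq_zero_or_pos n with hn0 | hn
  · subst hn0
    simpa using hode t ht
  have hs : UniqueDiffOn ℝ (Set.Icc (0:ℝ) ℓ) := uniqueDiffOn_Icc hℓ
  have hcont : ContinuousOn (iteratedDerivWithin n f (Set.Icc 0 ℓ)) (Set.Icc 0 ℓ) :=
    hf.continuousOn_iteratedDerivWithin le_rfl hs
  obtain ⟨t₀, ht₀, hmax⟩ := (isCompact_Icc).exists_isMaxOn
    (Set.nonempty_Icc.mpr hℓ.le) hcont.abs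
  set M := |iteratedDerivWithin n f (Set.Icc 0 ℓ) t₀| with hMdef
  have hM0 : 0 ≤ M := abs_nonneg _
  have hM : ∀ x ∈ Set.Icc (0:ℝ) ℓ, |iteratedDerivWithin n f (Set.Icc 0 ℓ) x| ≤ M :=
    fun x hx => hmax hx
  obtain ⟨Zn, hZnsub, hZncard⟩ := Finset.exists_subset_card_eq hcard
  have hZn : ∀ x ∈ Zn, x ∈ Set.Icc (0:ℝ) ℓ ∧ f x = 0 := fun x hx => hZ x (hZnsub hx)
  have hbound : ∀ k, 1 ≤ k → k ≤ n → ∀ x ∈ Set.Icc (0:ℝ) ℓ,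
      |iteratedDerivWithin (n - k) f (Set.Icc 0 ℓ) x| ≤ M * ℓ ^ k / k.factorial := by
    intro k hk1 hkn
    obtain ⟨T, hTcard, hT⟩ := dvp_rolle_iter hℓ (n - k) f
      (hf.of_le (by exact_mod_cast Nat.sub_le n k)) Zn hZn
    have hTk : k ≤ T.card := by omega
    apply dvp_interp hℓ hk1 (dvp_contDiffOn_iter hs (n - k) f n k hf (by omega)) hM0
      ?_ T hT hTk
    intro x hx
    rw [dvp_iter_iter hs f (n - k) k x hx, Nat.sub_add_cancel hkn]
    exact hM x hx
  have hMzero : M = 0 := by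
    by_contra hMne
    have hMpos : 0 < M := lt_of_le_of_ne hM0 (Ne.symm hMne)
    have h1 := hode t₀ ht₀
    have h2 : M ≤ ∑ k ∈ Finset.Icc 1 n, A k * (M * ℓ ^ k / k.factorial) := by
      have he : iteratedDerivWithin n f (Set.Icc 0 ℓ) t₀
          = -∑ k ∈ Finset.Icc 1 n, a k t₀ * iteratedDerivWithin (n - k) f (Set.Icc 0 ℓ) t₀ := by
        linarith
      calc M = |-∑ k ∈ Finset.Icc 1 n, a k t₀
          * iteratedDerivWithin (n - k) f (Set.Icc 0 ℓ) t₀| := by rw [hMdef, he]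
      _ = |∑ k ∈ Finset.Icc 1 n, a k t₀
          * iteratedDerivWithin (n - k) f (Set.Icc 0 ℓ) t₀| := abs_neg _
      _ ≤ ∑ k ∈ Finset.Icc 1 n, |a k t₀
          * iteratedDerivWithin (n - k) f (Set.Icc 0 ℓ) t₀| := Finset.abs_sum_le_sum_abs _ _
      _ ≤ ∑ k ∈ Finset.Icc 1 n, A k * (M * ℓ ^ k / k.factorial) := by
          apply Finset.sum_le_sum
          intro k hk
          rw [abs_mul]
          have hk1 : 1 ≤ k := (Finset.mem_Icc.mp hk).1
          have hkn : k ≤ n := (Finset.mem_Icc.mp hk).2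
          exact mul_le_mul (hbd k hk t₀ ht₀) (hbound k hk1 hkn t₀ ht₀) (abs_nonneg _)
            (le_trans (abs_nonneg _) (hbd k hk 0 (Set.left_mem_Icc.mpr hℓ.le)))
    have h3 : ∑ k ∈ Finset.Icc 1 n, A k * (M * ℓ ^ k / k.factorial)
        = M * ∑ k ∈ Finset.Icc 1 n, A k * ℓ ^ k / k.factorial := by
      rw [Finset.mul_sum]
      exact Finset.sum_congr rfl fun k _ => by ring
    rw [h3] at h2
    nlinarith
  have hfin := hbound n hn le_rfl t ht
  rw [Nat.sub_self, hMzero] at hfin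
  simp only [iteratedDerivWithin_zero, zero_mul, zero_div] at hfin
  exact abs_nonpos_iff.mp hfin
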